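/- With φ as above, Φ₂(ω) = Ψ(φ(ω)) for every binary word ω, where Φ₂ is the second fundamental Foata transformation on binary words and Ψ the inverse first Foata transformation. Consequently, Ψ(ω) = Φ₂(ω) for every ω in the fixed-point set H = {ω = 1^{m_0} 2^{n_0} ⋯ 1^{m_d} 2^{n_d} : m_0 = m_d − 1 and m_i = m_{d−i} for 1 ≤ i ≤ d−1}. -/

import Mathlib

/-- Count the leading letters of a list equal to `a`; return the count and the rest. -/
def leadCount (a : ℕ) : List ℕ → ℕ × List ℕ
  | [] => (0, [])
  | b :: rest =>
    if b = a then
      let p := leadCount a rest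
      (p.1 + 1, p.2)
    else (0, b :: rest)

def blocksAux : ℕ → List ℕ → List (ℕ × ℕ)
  | 0, _ => []
  | _, [] => []
  | fuel + 1, w =>
    let p := leadCount 1 w
    let q := leadCount 2 p.2
    (p.1, q.1) :: blocksAux fuel q.2

/-- The descent-block decomposition `[(m₀,n₀),…,(m_d,n_d)]` of a binary word
`1^{m₀} 2^{n₀} ⋯ 1^{m_d} 2^{n_d}`. -/
def blocks (w : List ℕ) : List (ℕ × ℕ) := blocksAux w.length w

/-- The word `1^{m₀} 2^{n₀} ⋯ 1^{m_d} 2^{n_d}` determined by blocks. -/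
def blockWord (bs : List (ℕ × ℕ)) : List ℕ :=
  bs.flatMap fun p => List.replicate p.1 1 ++ List.replicate p.2 2

/-- `[(m₀,n₀),…,(m_d,n_d)]` is a valid descent-block decomposition:
`m_i > 0` for `1 ≤ i ≤ d` and `n_j > 0` for `0 ≤ j ≤ d-1`. -/
def ValidBlocks (bs : List (ℕ × ℕ)) : Prop :=
  bs ≠ [] ∧ (∀ p ∈ bs.tail, 0 < p.1) ∧ (∀ p ∈ bs.dropLast, 0 < p.2)

/-- A word on the alphabet {1,2}. -/
def IsBinary (w : List ℕ) : Prop := ∀ a ∈ w, a = 1 ∨ a = 2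

/-- The descent number of a word. -/
def des (w : List ℕ) : ℕ := (w.zip w.tail).countP fun p => decide (p.2 < p.1)

/-- The excedance number of a binary word with `k` ones: the number of
positions `i ≤ k` carrying the letter 2. -/
def exc (w : List ℕ) : ℕ := (w.take (w.count 1)).count 2

/-- `Ψ = Φ₁⁻¹` on binary words, via the descent-block decomposition. -/
def psiBlocks (bs : List (ℕ × ℕ)) : List ℕ :=
  List.replicate (bs.headD (0,0)).1 1
    ++ bs.tail.flatMap (fun p => 2 :: List.replicate (p.1 - 1) 1)
    ++ bs.dropLast.flatMap (fun p => List.replicate (p.2 - 1) 2 ++ [1])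
    ++ List.replicate (bs.getLastD (0,0)).2 2

def Psi (w : List ℕ) : List ℕ := psiBlocks (blocks w)

/-- Foata's second fundamental transformation on binary words. -/
def phi2Blocks (bs : List (ℕ × ℕ)) : List ℕ :=
  bs.tail.reverse.flatMap (fun p => List.replicate (p.1 - 1) 1 ++ [2])
    ++ List.replicate (bs.headD (0,0)).1 1
    ++ bs.dropLast.flatMap (fun p => List.replicate (p.2 - 1) 2 ++ [1])
    ++ List.replicate (bs.getLastD (0,0)).2 2

def Phi2 (w : List ℕ) : List ℕ := phi2Blocks (blocks w)

/-- The extended Steingrímsson map `Γ` on binary words. -/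
def gammaBlocks (bs : List (ℕ × ℕ)) : List ℕ :=
  match bs with
  | [] => []
  | [(m0, n0)] => List.replicate m0 1 ++ List.replicate n0 2
  | (m0, n0) :: rest =>
      List.replicate m0 1
        ++ rest.dropLast.flatMap (fun p => 2 :: List.replicate (p.1 - 1) 1)
        ++ (2 :: List.replicate (rest.getLastD (0,0)).1 1)
        ++ (let ns := n0 :: rest.map Prod.snd
            ns.dropLast.dropLast.flatMap (fun nj => List.replicate (nj - 1) 2 ++ [1])
              ++ List.replicate (ns.dropLast.getLastD 0 - 1 + ns.getLastD 0) 2)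

def Gamma (w : List ℕ) : List ℕ := gammaBlocks (blocks w)

/-- The involution `φ` on binary words. -/
def phi (w : List ℕ) : List ℕ :=
  let bs := blocks w
  let ns := bs.map Prod.snd
  let newms : List ℕ :=
    match (bs.map Prod.fst).reverse with
    | [] => []
    | [a] => [a]
    | a :: rest => (a - 1) :: (rest.dropLast ++ [rest.getLastD 0 + 1])
  blockWord (newms.zip ns)

/-- Fibonacci words: binary words with no two consecutive ones. -/
def IsFib (w : List ℕ) : Prop :=
  IsBinary w ∧ w.Chain' fun a b => ¬(a = 1 ∧ b = 1)

def FibSet (n : ℕ) : Set (List ℕ) := {w | IsFib w ∧ w.length = n}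

/-- Fibonacci words of length `n` ending with the letter 1. -/
def FibSet' (n : ℕ) : Set (List ℕ) :=
  {w | IsFib w ∧ w.length = n ∧ w.getLast? = some 1}

/-- Binary words of length `n` with no two consecutive twos. -/
def GSet (n : ℕ) : Set (List ℕ) :=
  {w | IsBinary w ∧ w.length = n ∧ w.Chain' fun a b => ¬(a = 2 ∧ b = 2)}

/-- The word `1^{m₀} 2^{d+n₀-1} 1 2^{n₁-1} ⋯ 1 2^{n_{d-1}-1} 1 2^{n_d}`. -/
def Rword (m0 : ℕ) (ns : List ℕ) : List ℕ :=
  match ns with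
  | [] => List.replicate m0 1
  | [n0] => List.replicate m0 1 ++ List.replicate n0 2
  | n0 :: rest =>
      List.replicate m0 1 ++ List.replicate (rest.length + n0 - 1) 2
        ++ rest.dropLast.flatMap (fun nj => 1 :: List.replicate (nj - 1) 2)
        ++ (1 :: List.replicate (rest.getLastD 0) 2)

def RSet (n : ℕ) : Set (List ℕ) :=
  {w | ∃ m0 ns, m0 ≤ 1 ∧ ns ≠ [] ∧ (∀ j ∈ List.dropLast ns, 1 ≤ j) ∧
        w = Rword m0 ns ∧ w.length = n}

/-- The Fibonacci word `1^{m₀} 2^{n₀} 1 2^{n₁} ⋯ 1 2^{n_d}`. -/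
def Fword (m0 : ℕ) (ns : List ℕ) : List ℕ :=
  List.replicate m0 1 ++ List.replicate (ns.headD 0) 2
    ++ ns.tail.flatMap fun nj => 1 :: List.replicate nj 2

lemma leadCount_decomp (a : ℕ) : ∀ w : List ℕ,
    w = List.replicate (leadCount a w).1 a ++ (leadCount a w).2 ∧
    ∀ b ∈ (leadCount a w).2.head?, b ≠ a := by
  intro w
  induction w with
  | nil => simp [leadCount]
  | cons c t ih =>
    by_cases h : c = a
    · subst h
      simp only [leadCount, if_pos rfl]
      refine ⟨?_, ih.2⟩
      conv_lhs => rw [ih.1]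
      simp [List.replicate_succ]
    · simp [leadCount, h]

lemma leadCount_replicate_append (a k : ℕ) (l : List ℕ)
    (h : ∀ b ∈ l.head?, b ≠ a) :
    leadCount a (List.replicate k a ++ l) = (k, l) := by
  induction k with
  | zero =>
    cases l with
    | nil => simp [leadCount]
    | cons b t => simp at h; simp [leadCount, h]
  | succ k ih => simp [List.replicate_succ, leadCount, ih]

lemma blocksAux_nil (f : ℕ) : blocksAux f [] = [] := by
  cases f <;> rfl

lemma blockWord_cons (a b : ℕ) (l : List (ℕ × ℕ)) :
    blockWord ((a, b) :: l) =
      List.replicate a 1 ++ List.replicate b 2 ++ blockWord l := by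
  simp [blockWord]

lemma blocksAux_spec : ∀ (fuel : ℕ) (w : List ℕ), w.length ≤ fuel → IsBinary w →
    blockWord (blocksAux fuel w) = w ∧
    (∀ p ∈ (blocksAux fuel w).tail, 0 < p.1) ∧
    (∀ p ∈ (blocksAux fuel w).dropLast, 0 < p.2) ∧
    ((∀ b ∈ w.head?, b ≠ 2) → ∀ p ∈ blocksAux fuel w, 0 < p.1) ∧
    (w ≠ [] → blocksAux fuel w ≠ []) := by
  intro fuel
  induction fuel with
  | zero =>
    intro w hw _
    have : w = [] := List.eq_nil_of_length_eq_zero (Nat.le_zero.mp hw)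
    subst this
    simp [blocksAux, blockWord]
  | succ fuel ih =>
    intro w hw hbin
    cases w with
    | nil => simp [blocksAux_nil, blockWord]
    | cons c w' =>
      have d1 := (leadCount_decomp 1 (c :: w')).1
      have h1 := (leadCount_decomp 1 (c :: w')).2
      rcases e1 : leadCount 1 (c :: w') with ⟨m, u⟩
      rw [e1] at d1 h1
      have d2 := (leadCount_decomp 2 u).1
      have h2 := (leadCount_decomp 2 u).2
      rcases e2 : leadCount 2 u with ⟨n, v⟩
      rw [e2] at d2 h2
      simp only at d1 h1 d2 h2
      have hred : blocksAux (fuel + 1) (c :: w') = (m, n) :: blocksAux fuel v := by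
        simp only [blocksAux, e1, e2]
      have hvmem : ∀ b ∈ v, b ∈ c :: w' := by
        intro b hb
        rw [d1, d2]
        simp [hb]
      have hvbin : IsBinary v := fun b hb => hbin b (hvmem b hb)
      have hlen1 : (c :: w').length = m + u.length := by
        rw [d1]; simp
      have hlen2 : u.length = n + v.length := by
        rw [d2]; simp
      have hmn : 0 < m + n := by
        by_contra h
        push_neg at h
        have hm0 : m = 0 := by omega
        have hn0 : n = 0 := by omega
        rw [hm0] at d1; rw [hn0] at d2
        simp at d1 d2
        have hc1 : (c ≠ 1) := by
          have := h1 c; rw [← d1] at this; simp at this; exact this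
        have hc2 : (c ≠ 2) := by
          have := h2 c; rw [← d2, ← d1] at this; simp at this; exact this
        rcases hbin c (by simp) with h | h <;> simp_all
      have hvfuel : v.length ≤ fuel := by
        simp at hw hlen1; omega
      obtain ⟨ihw, ihtail, ihdrop, ihall, ihne⟩ := ih v hvfuel hvbin
      have hn_pos : blocksAux fuel v ≠ [] → 0 < n := by
        intro hne'
        have hvne : v ≠ [] := by
          intro h; rw [h, blocksAux_nil] at hne'; exact hne' rfl
        by_contra h
        push_neg at h
        have hn0 : n = 0 := by omega
        rw [hn0] at d2; simp at d2
        obtain ⟨b, t, hb⟩ := List.exists_cons_of_ne_nil hvne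
        have hb1 : b ≠ 1 := by
          have := h1 b; rw [d2, hb] at this; simp at this; exact this
        have hb2 : b ≠ 2 := by
          have := h2 b; rw [hb] at this; simp at this; exact this
        rcases hvbin b (by simp [hb]) with h | h <;> simp_all
      refine ⟨?_, ?_, ?_, ?_, ?_⟩
      · rw [hred, blockWord_cons, ihw, List.append_assoc, ← d2, ← d1]
      · rw [hred]
        intro p hp
        exact ihall h2 p hp
      · rw [hred]
        rcases heq : blocksAux fuel v with _ | ⟨q, qs⟩
        · simp
        · rw [List.dropLast_cons₂]
          intro p hp
          rcases List.mem_cons.mp hp with h | h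
          · subst h; exact hn_pos (by rw [heq]; simp)
          · rw [← heq] at h
            exact ihdrop p h
      · intro hhead p hp
        rw [hred] at hp
        rcases List.mem_cons.mp hp with h | h
        · subst h
          simp only
          by_contra hm0
          push_neg at hm0
          have hm0 : m = 0 := by omega
          rw [hm0] at d1; simp at d1
          have hc : c = 1 ∨ c = 2 := hbin c (by simp)
          have hc2 : c ≠ 2 := by have := hhead c; simp at this; exact this
          have hc1 : c ≠ 1 := by
            have := h1 c; rw [← d1] at this; simp at this; exact this
          rcases hc with h | h <;> simp_all
        · exact ihall h2 p h
      · intro _; rw [hred]; simp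

lemma blockWord_head1 (p : ℕ × ℕ) (l : List (ℕ × ℕ)) (h : 0 < p.1) :
    ∀ b ∈ (blockWord (p :: l)).head?, b = 1 := by
  rcases p with ⟨a, b⟩
  simp only at h
  rcases a with _ | a
  · omega
  · rw [blockWord_cons]
    simp [List.replicate_succ]

lemma blocksAux_blockWord : ∀ (bs : List (ℕ × ℕ)) (fuel : ℕ),
    (blockWord bs).length ≤ fuel →
    (∀ p ∈ bs.tail, 0 < p.1) → (∀ p ∈ bs.dropLast, 0 < p.2) →
    blockWord bs ≠ [] →
    blocksAux fuel (blockWord bs) = bs := by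
  intro bs
  induction bs with
  | nil => intro fuel _ _ _ hne; simp [blockWord] at hne
  | cons p rest ih =>
    rcases p with ⟨m, n⟩
    intro fuel hfuel htail hdrop hne
    rw [blockWord_cons] at hfuel hne ⊢
    cases rest with
    | nil =>
      have hmn : 0 < m + n := by
        by_contra h
        push_neg at h
        have : m = 0 ∧ n = 0 := by omega
        simp [blockWord, this.1, this.2] at hne
      rcases fuel with _ | f
      · exfalso
        simp [blockWord] at hfuel
        omega
      · have hlc1 : leadCount 1 (List.replicate m 1 ++ List.replicate n 2
            ++ blockWord []) = (m, List.replicate n 2) := by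
          simp only [blockWord, List.flatMap_nil, List.append_nil, List.append_assoc]
          apply leadCount_replicate_append
          cases n <;> simp [List.replicate_succ]
        have hlc2 : leadCount 2 (List.replicate n 2) = (n, []) := by
          have := leadCount_replicate_append 2 n [] (by simp)
          simpa using this
        simp only [blocksAux, hlc1, hlc2, blocksAux_nil]
    | cons q qs =>
      have hq1 : 0 < q.1 := htail q (by simp)
      have hn : 0 < n := by
        have := hdrop (m, n) (by simp [List.dropLast_cons₂])
        simpa using this
      have hbw1 : ∀ b ∈ (blockWord (q :: qs)).head?, b = 1 :=
        blockWord_head1 q qs hq1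
      have hbwne : blockWord (q :: qs) ≠ [] := by
        intro h
        have := hbw1
        rw [h] at this
        rcases q with ⟨a, b⟩
        rw [blockWord_cons] at h
        simp at h
        omega
      have hlc1 : leadCount 1 (List.replicate m 1 ++ List.replicate n 2
          ++ blockWord (q :: qs)) =
          (m, List.replicate n 2 ++ blockWord (q :: qs)) := by
        rw [List.append_assoc]
        apply leadCount_replicate_append
        rcases n with _ | n
        · omega
        · simp [List.replicate_succ]
      have hlc2 : leadCount 2 (List.replicate n 2 ++ blockWord (q :: qs)) =
          (n, blockWord (q :: qs)) := by
        apply leadCount_replicate_append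
        intro b hb
        have := hbw1 b hb
        omega
      rcases fuel with _ | f
      · exfalso
        simp at hfuel
        have : blockWord (q :: qs) = [] := List.eq_nil_of_length_eq_zero (by omega)
        exact hbwne this
      · simp only [blocksAux, hlc1, hlc2]
        congr 1
        apply ih
        · simp at hfuel; omega
        · intro p hp
          exact htail p (List.mem_of_mem_tail hp)
        · intro p hp
          apply hdrop
          rw [List.dropLast_cons₂]
          exact List.mem_cons_of_mem _ hp
        · exact hbwne

def phiBlocks (bs : List (ℕ × ℕ)) : List (ℕ × ℕ) :=
  (match (bs.map Prod.fst).reverse with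
    | [] => ([] : List ℕ)
    | [a] => [a]
    | a :: rest => (a - 1) :: (rest.dropLast ++ [rest.getLastD 0 + 1])).zip
    (bs.map Prod.snd)

lemma phi_eq (w : List ℕ) : phi w = blockWord (phiBlocks (blocks w)) := rfl

lemma zip_flatMap_fst : ∀ (l₁ l₂ : List ℕ), l₁.length = l₂.length →
    ∀ f : ℕ → List ℕ, (l₁.zip l₂).flatMap (fun p => f p.1) = l₁.flatMap f := by
  intro l₁
  induction l₁ with
  | nil => intro l₂ _ f; simp
  | cons a t ih =>
    intro l₂ h f
    cases l₂ with
    | nil => simp at h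
    | cons b t₂ =>
      simp only [List.zip_cons_cons, List.flatMap_cons]
      rw [ih t₂ (by simpa using h)]

lemma zip_flatMap_snd : ∀ (l₁ l₂ : List ℕ), l₁.length = l₂.length →
    ∀ f : ℕ → List ℕ, (l₁.zip l₂).flatMap (fun p => f p.2) = l₂.flatMap f := by
  intro l₁
  induction l₁ with
  | nil =>
    intro l₂ h f
    cases l₂ with
    | nil => simp
    | cons b t₂ => simp at h
  | cons a t ih =>
    intro l₂ h f
    cases l₂ with
    | nil => simp at h
    | cons b t₂ =>
      simp only [List.zip_cons_cons, List.flatMap_cons]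
      rw [ih t₂ (by simpa using h)]

lemma zip_self (l : List (ℕ × ℕ)) :
    (l.map Prod.fst).zip (l.map Prod.snd) = l := by
  rw [List.zip_map']; simp

lemma swap_flatMap (L : List ℕ) (r : List ℕ) :
    L.flatMap (fun m => 2 :: List.replicate (m - 1) 1) ++ (2 :: r) =
      2 :: (L.flatMap (fun m => List.replicate (m - 1) 1 ++ [2]) ++ r) := by
  induction L generalizing r with
  | nil => simp
  | cons a t ih => simp [ih]

lemma phiBlocks_cons_concat (m0 n0 md nd : ℕ) (ir : List (ℕ × ℕ)) :
    phiBlocks ((m0, n0) :: (ir ++ [(md, nd)])) =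
      (md - 1, n0) :: (((ir.map Prod.fst).reverse).zip (ir.map Prod.snd)
        ++ [(m0 + 1, nd)]) := by
  have hrev : (((m0, n0) :: (ir ++ [(md, nd)])).map Prod.fst).reverse =
      md :: ((ir.map Prod.fst).reverse ++ [m0]) := by simp
  unfold phiBlocks
  rw [hrev]
  simp only [List.map_cons, List.map_append, List.map_nil]
  cases h : (ir.map Prod.fst).reverse with
  | nil =>
    have hir : ir = [] := by
      have := congrArg List.length h
      simp at this
      exact this
    subst hir
    simp
  | cons a t =>
    have hlen : (a :: (t ++ [m0 + 1])).length = (ir.map Prod.snd ++ [nd]).length := by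
      have := congrArg List.length h
      simp at this ⊢
      omega
    show ((md - 1) :: ((a :: t ++ [m0]).dropLast ++ [(a :: t ++ [m0]).getLastD 0 + 1])).zip
        (n0 :: (ir.map Prod.snd ++ [nd])) = _
    rw [show (a :: t ++ [m0]).dropLast = a :: t from List.dropLast_concat,
        show (a :: t ++ [m0]).getLastD 0 = m0 from List.getLastD_concat]
    simp only [List.zip_cons_cons]
    congr 1
    have : a :: t ++ [m0 + 1] = (a :: t) ++ [m0 + 1] := rfl
    rw [this, List.zip_append (by simpa using hlen), ← h]
    simp

lemma flatMap_fst_pair (l : List (ℕ × ℕ)) (f : ℕ → List ℕ) :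
    l.flatMap (fun p => f p.1) = (l.map Prod.fst).flatMap f :=
  (List.flatMap_map _ _ _).symm

lemma flatMap_snd_pair (l : List (ℕ × ℕ)) (f : ℕ → List ℕ) :
    l.flatMap (fun p => f p.2) = (l.map Prod.snd).flatMap f :=
  (List.flatMap_map _ _ _).symm

lemma phiBlocks_nil : phiBlocks [] = [] := rfl

lemma phiBlocks_singleton (m n : ℕ) : phiBlocks [(m, n)] = [(m, n)] := rfl

lemma main_core (bs : List (ℕ × ℕ))
    (htail : ∀ p ∈ bs.tail, 0 < p.1) (hdrop : ∀ p ∈ bs.dropLast, 0 < p.2) :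
    phi2Blocks bs = psiBlocks (phiBlocks bs) ∧
    (∀ p ∈ (phiBlocks bs).tail, 0 < p.1) ∧
    (∀ p ∈ (phiBlocks bs).dropLast, 0 < p.2) ∧
    (blockWord bs ≠ [] → blockWord (phiBlocks bs) ≠ []) := by
  cases bs with
  | nil => exact ⟨rfl, by simp [phiBlocks_nil], by simp [phiBlocks_nil], fun h => h⟩
  | cons p rest =>
    rcases p with ⟨m0, n0⟩
    rcases List.eq_nil_or_concat rest with hrest | ⟨ir, q, hrest⟩
    · subst hrest
      refine ⟨?_, by simp [phiBlocks_singleton], by simp [phiBlocks_singleton], ?_⟩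
      · rw [phiBlocks_singleton]
        simp [phi2Blocks, psiBlocks]
      · rw [phiBlocks_singleton]; exact fun h => h
    · rcases q with ⟨md, nd⟩
      rw [List.concat_eq_append] at hrest
      subst hrest
      have hzlen : ((ir.map Prod.fst).reverse).length = (ir.map Prod.snd).length := by
        simp
      set Z := ((ir.map Prod.fst).reverse).zip (ir.map Prod.snd) with hZ
      have hn0 : 0 < n0 := by
        have := hdrop (m0, n0) (by
          rw [show (m0,n0) :: (ir ++ [(md,nd)]) = ((m0,n0) :: ir) ++ [(md,nd)] from rfl,
            List.dropLast_concat]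
          simp)
        simpa using this
      rw [phiBlocks_cons_concat]
      refine ⟨?_, ?_, ?_, ?_⟩
      · -- the main identity
        have hdl : ((m0,n0) :: (ir ++ [(md,nd)])).dropLast = (m0,n0) :: ir := by
          rw [show (m0,n0) :: (ir ++ [(md,nd)]) = ((m0,n0) :: ir) ++ [(md,nd)] from rfl,
            List.dropLast_concat]
        have hgl : ((m0,n0) :: (ir ++ [(md,nd)])).getLastD (0,0) = (md,nd) := by
          rw [show (m0,n0) :: (ir ++ [(md,nd)]) = ((m0,n0) :: ir) ++ [(md,nd)] from rfl,
            List.getLastD_concat]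
        have hdl' : ((md-1,n0) :: (Z ++ [(m0+1,nd)])).dropLast = (md-1,n0) :: Z := by
          rw [show (md-1,n0) :: (Z ++ [(m0+1,nd)]) = ((md-1,n0) :: Z) ++ [(m0+1,nd)] from rfl,
            List.dropLast_concat]
        have hgl' : ((md-1,n0) :: (Z ++ [(m0+1,nd)])).getLastD (0,0) = (m0+1,nd) := by
          rw [show (md-1,n0) :: (Z ++ [(m0+1,nd)]) = ((md-1,n0) :: Z) ++ [(m0+1,nd)] from rfl,
            List.getLastD_concat]
        unfold phi2Blocks psiBlocks
        rw [hdl, hgl, hdl', hgl']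
        simp only [List.tail_cons, List.headD_cons, List.flatMap_cons, List.flatMap_append,
          List.reverse_append, List.reverse_cons, List.reverse_nil, List.nil_append,
          List.singleton_append]
        rw [zip_flatMap_fst _ _ hzlen (fun m => 2 :: List.replicate (m - 1) 1),
          zip_flatMap_snd _ _ hzlen (fun n => List.replicate (n - 1) 2 ++ [1]),
          flatMap_fst_pair ir.reverse (fun m => List.replicate (m - 1) 1 ++ [2]),
          List.map_reverse,
          flatMap_snd_pair ir (fun n => List.replicate (n - 1) 2 ++ [1])]
        simp only [Nat.add_sub_cancel, List.append_assoc, List.cons_append,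
          List.singleton_append]
        rw [swap_flatMap]
        simp
      · -- tail fst positivity
        intro p hp
        simp only [List.tail_cons] at hp
        rcases List.mem_append.mp hp with h | h
        · rcases p with ⟨a, b⟩
          have := (List.of_mem_zip (by exact h)).1
          rw [List.mem_reverse] at this
          obtain ⟨q, hq, hq2⟩ := List.mem_map.mp this
          have : 0 < q.1 := htail q (by simp [hq])
          simp only at *
          omega
        · simp at h
          subst h
          simp
      · -- dropLast snd positivity
        intro p hp
        rw [show (md-1,n0) :: (Z ++ [(m0+1,nd)]) = ((md-1,n0) :: Z) ++ [(m0+1,nd)] from rfl,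
          List.dropLast_concat] at hp
        rcases List.mem_cons.mp hp with h | h
        · subst h; simpa using hn0
        · rcases p with ⟨a, b⟩
          have := (List.of_mem_zip (by exact h)).2
          obtain ⟨q, hq, hq2⟩ := List.mem_map.mp this
          have : 0 < q.2 := by
            apply hdrop
            rw [show (m0,n0) :: (ir ++ [(md,nd)]) = ((m0,n0) :: ir) ++ [(md,nd)] from rfl,
              List.dropLast_concat]
            simp [hq]
          simp only at *
          omega
      · -- nonempty
        intro _
        rw [blockWord_cons]
        simp only [ne_eq, List.append_assoc, List.append_eq_nil_iff]
        rintro ⟨-, h2, -⟩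
        rcases n0 with _ | n0
        · omega
        · simp [List.replicate_succ] at h2

lemma part1 (w : List ℕ) (hbin : IsBinary w) : Phi2 w = Psi (phi w) := by
  by_cases hw : w = []
  · subst hw; rfl
  · obtain ⟨hword, htail, hdrop, -, -⟩ := blocksAux_spec w.length w le_rfl hbin
    have htail' : ∀ p ∈ (blocks w).tail, 0 < p.1 := htail
    have hdrop' : ∀ p ∈ (blocks w).dropLast, 0 < p.2 := hdrop
    have hcore := main_core (blocks w) htail' hdrop'
    have hwne : blockWord (blocks w) ≠ [] := by
      show blockWord (blocksAux w.length w) ≠ []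
      rw [hword]; exact hw
    rw [Phi2, phi_eq, Psi]
    rw [show blocks (blockWord (phiBlocks (blocks w))) =
        blocksAux (blockWord (phiBlocks (blocks w))).length
          (blockWord (phiBlocks (blocks w))) from rfl]
    rw [blocksAux_blockWord (phiBlocks (blocks w)) _ le_rfl hcore.2.1 hcore.2.2.1
      (hcore.2.2.2 hwne)]
    exact hcore.1

lemma phiBlocks_fixed (bs : List (ℕ × ℕ)) (htail : ∀ p ∈ bs.tail, 0 < p.1)
    (h1 : (bs.map Prod.fst).headD 0 = (bs.map Prod.fst).getLastD 0 - 1)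
    (h2 : ∀ i, 1 ≤ i → i ≤ (bs.map Prod.fst).length - 1 - 1 →
      (bs.map Prod.fst).getD i 0 =
        (bs.map Prod.fst).getD ((bs.map Prod.fst).length - 1 - i) 0) :
    phiBlocks bs = bs := by
  cases bs with
  | nil => rfl
  | cons p rest =>
    rcases p with ⟨m0, n0⟩
    rcases List.eq_nil_or_concat rest with hrest | ⟨ir, q, hrest⟩
    · subst hrest; exact phiBlocks_singleton m0 n0
    · rcases q with ⟨md, nd⟩
      rw [List.concat_eq_append] at hrest
      subst hrest
      have hms : ((m0,n0) :: (ir ++ [(md,nd)])).map Prod.fst =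
          m0 :: (ir.map Prod.fst ++ [md]) := by simp
      rw [hms] at h1 h2
      have hlen : (m0 :: (ir.map Prod.fst ++ [md])).length =
          (ir.map Prod.fst).length + 2 := by simp
      rw [hlen] at h2
      have hmd : 0 < md := by
        have := htail (md, nd) (by simp)
        simpa using this
      have hgl : (m0 :: (ir.map Prod.fst ++ [md])).getLastD 0 = md := by
        rw [show m0 :: (ir.map Prod.fst ++ [md]) =
          (m0 :: ir.map Prod.fst) ++ [md] from rfl, List.getLastD_concat]
      rw [hgl, List.headD_cons] at h1
      have hpal : (ir.map Prod.fst).reverse = ir.map Prod.fst := by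
        apply List.ext_getElem (by simp)
        intro n h₁ h₂
        rw [List.getElem_reverse]
        have hn : n < (ir.map Prod.fst).length := h₂
        have key := h2 (n + 1) (by omega) (by omega)
        have e1 : (m0 :: (ir.map Prod.fst ++ [md])).getD (n + 1) 0 =
            (ir.map Prod.fst)[n] := by
          rw [List.getD_cons_succ, List.getD_append _ _ _ _ hn,
            List.getD_eq_getElem _ _ hn]
        have heq : (ir.map Prod.fst).length + 2 - 1 - (n + 1) =
            ((ir.map Prod.fst).length - 1 - n) + 1 := by omega
        have e2 : (m0 :: (ir.map Prod.fst ++ [md])).getD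
            ((ir.map Prod.fst).length + 2 - 1 - (n + 1)) 0 =
            (ir.map Prod.fst).getD ((ir.map Prod.fst).length - 1 - n) 0 := by
          rw [heq, List.getD_cons_succ, List.getD_append _ _ _ _ (by omega)]
        have key' : (ir.map Prod.fst).getD ((ir.map Prod.fst).length - 1 - n) 0 =
            (ir.map Prod.fst).getD n 0 := by
          rw [← e2, ← key, e1, List.getD_eq_getElem _ _ hn]
        rw [List.getD_eq_getElem _ _ (by omega), List.getD_eq_getElem _ _ hn] at key'
        exact key'
      rw [phiBlocks_cons_concat]
      have hsnd : ((m0,n0) :: (ir ++ [(md,nd)])).map Prod.snd =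
          n0 :: (ir.map Prod.snd ++ [nd]) := by simp
      rw [show ((m0,n0) :: (ir ++ [(md,nd)])).map Prod.snd =
        n0 :: (ir.map Prod.snd ++ [nd]) from by simp] at *
      rw [hpal, zip_self, ← h1, show m0 + 1 = md from by omega]

theorem stmt_16 :
    (∀ w : List ℕ, IsBinary w → Phi2 w = Psi (phi w)) ∧
      ∀ w : List ℕ, IsBinary w →
        ((blocks w).map Prod.fst).headD 0 =
            ((blocks w).map Prod.fst).getLastD 0 - 1 →
        (∀ i, 1 ≤ i → i ≤ ((blocks w).map Prod.fst).length - 1 - 1 →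
          ((blocks w).map Prod.fst).getD i 0 =
            ((blocks w).map Prod.fst).getD
              (((blocks w).map Prod.fst).length - 1 - i) 0) →
        Psi w = Phi2 w := by
  refine ⟨part1, ?_⟩
  intro w hbin h1 h2
  obtain ⟨hword, htail, -, -, -⟩ := blocksAux_spec w.length w le_rfl hbin
  have htail' : ∀ p ∈ (blocks w).tail, 0 < p.1 := htail
  have hfix : phiBlocks (blocks w) = blocks w := phiBlocks_fixed (blocks w) htail' h1 h2
  have hphi : phi w = w := by
    rw [phi_eq, hfix]
    exact hword
  have := part1 w hbin
  rw [hphi] at this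
  exact this.symm
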